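/- Let p be an odd prime and a, b ∈ (Z/pZ)^× with 4a + b² ≢ 0 (mod p), and let α ≠ β be the roots of t² - b t - a in Z/pZ (assuming they exist). Let k = ord(α·β⁻¹) be the multiplicative order of αβ⁻¹ in (Z/pZ)^×, and let Ω = {(αβ⁻¹)^j : 1 ≤ j ≤ k-1}. For x₀ ∉ {α, β}: if (x₀ - α)(x₀ - β)⁻¹ ∈ Ω then the orbit of x₀ under φ is purely periodic with least period k - 1; otherwise it is purely periodic with least period k. -/

import Mathlib

open Polynomial

/-- Least periods of the inversive map when `t² - b t - a` has distinct roots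
`α ≠ β` in `Z/pZ`: for `x₀ ∉ {α, β}`, the orbit is purely periodic with least
period `k - 1` if `(x₀-α)(x₀-β)⁻¹ ∈ Ω`, and `k` otherwise, where
`k = ord(αβ⁻¹)` and `Ω` is the set of nontrivial powers of `αβ⁻¹`. -/
theorem stmt7 (p : ℕ) (hp : p.Prime) (hp2 : p ≠ 2)
    (a b α β : ZMod p) (ha : IsUnit a) (hb : IsUnit b)
    (hΔ : 4 * a + b ^ 2 ≠ 0) (hαβ : α ≠ β)
    (hfac : (X ^ 2 - C b * X - C a : Polynomial (ZMod p)) = (X - C α) * (X - C β))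
    (φ : ZMod p → ZMod p)
    (hφ : ∀ x, φ x = if x ≠ 0 then a * x⁻¹ + b else b)
    (x0 : ZMod p) (hx0α : x0 ≠ α) (hx0β : x0 ≠ β) :
    let k := orderOf (α * β⁻¹)
    let Ω : Set (ZMod p) := {w | ∃ j, 1 ≤ j ∧ j ≤ k - 1 ∧ w = (α * β⁻¹) ^ j}
    ((x0 - α) * (x0 - β)⁻¹ ∈ Ω →
      φ^[k - 1] x0 = x0 ∧ ∀ T, 0 < T → φ^[T] x0 = x0 → k - 1 ≤ T) ∧
    ((x0 - α) * (x0 - β)⁻¹ ∉ Ω →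
      φ^[k] x0 = x0 ∧ ∀ T, 0 < T → φ^[T] x0 = x0 → k ≤ T) := by
  haveI := Fact.mk hp
  intro k Ω
  set q : ZMod p := α * β⁻¹ with hqdef
  set ψ : ZMod p → ZMod p := fun x => (x - α) * (x - β)⁻¹ with hψdef
  set w : ZMod p := (x0 - α) * (x0 - β)⁻¹ with hwdef
  -- coefficients
  have h0 := congrArg (Polynomial.eval 0) hfac
  have h1 := congrArg (Polynomial.eval 1) hfac
  simp [Polynomial.eval_mul, Polynomial.eval_sub, Polynomial.eval_pow] at h0 h1
  have hab : α * β = -a := by linear_combination -h0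
  have hb' : b = α + β := by linear_combination -h1 + h0
  have ha0 : a ≠ 0 := ha.ne_zero
  have hα0 : α ≠ 0 := by
    intro h; apply ha0
    have : α * β = -a := hab
    rw [h, zero_mul] at this
    exact neg_eq_zero.mp this.symm
  have hβ0 : β ≠ 0 := by
    intro h; apply ha0
    have : α * β = -a := hab
    rw [h, mul_zero] at this
    exact neg_eq_zero.mp this.symm
  have hq0 : q ≠ 0 := mul_ne_zero hα0 (inv_ne_zero hβ0)
  have hq1 : q ≠ 1 := by
    intro h
    apply hαβ
    field_simp [hqdef] at h
    exact (mul_inv_eq_one₀ hβ0).mp h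
  -- order facts
  have hfin : IsOfFinOrder q := by
    rw [isOfFinOrder_iff_pow_eq_one]
    exact ⟨p - 1, by have := hp.one_lt; omega, ZMod.pow_card_sub_one_eq_one hq0⟩
  have hk0 : 0 < k := hfin.orderOf_pos
  have hqk : q ^ k = 1 := pow_orderOf_eq_one q
  have hk1 : k ≠ 1 := by
    intro h
    exact hq1 (by simpa [h] using hqk)
  have hk2 : 2 ≤ k := by omega
  -- general tool: q^m = q^n for m < n < m + k is impossible
  have hqne : ∀ m n : ℕ, m < n → n - m < k → q ^ m ≠ q ^ n := by
    intro m n hmn hnk h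
    have h2 : q ^ m * q ^ (n - m) = q ^ m * 1 := by
      rw [mul_one, ← pow_add]
      rw [show m + (n - m) = n by omega]
      exact h.symm
    have h3 : q ^ (n - m) = 1 := mul_left_cancel₀ (pow_ne_zero m hq0) h2
    have h4 : k ∣ n - m := orderOf_dvd_of_pow_eq_one h3
    have h5 : k ≤ n - m := Nat.le_of_dvd (by omega) h4
    omega
  -- basic ψ facts
  have hsubβ : ∀ x : ZMod p, x ≠ β → x - β ≠ 0 := fun x h => sub_ne_zero.mpr h
  have hψinj : ∀ x y : ZMod p, x ≠ β → y ≠ β → ψ x = ψ y → x = y := by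
    intro x y hx hy h
    simp only [hψdef] at h
    have hx' := hsubβ x hx
    have hy' := hsubβ y hy
    field_simp at h
    have hcase : (α - β) * (x - y) = 0 := by linear_combination h
    rcases mul_eq_zero.mp hcase with h' | h'
    · exact absurd (sub_eq_zero.mp h') hαβ
    · exact sub_eq_zero.mp h'
  have hψ0 : ψ 0 = q := by
    simp only [hψdef, hqdef, zero_sub]
    rw [inv_neg]; ring
  have h0β : (0 : ZMod p) ≠ β := fun h => hβ0 h.symm
  have hw1 : w ≠ 1 := by
    intro h
    simp only [hwdef] at h
    have := hsubβ x0 hx0β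
    field_simp at h
    exact hαβ (by linear_combination -h)
  have hw0 : w ≠ 0 := mul_ne_zero (sub_ne_zero.mpr hx0α) (inv_ne_zero (hsubβ x0 hx0β))
  have hψx0 : ψ x0 = w := rfl
  -- the key conjugation step
  have hstep : ∀ x : ZMod p, x ≠ β → x ≠ 0 → (φ x ≠ β ∧ ψ (φ x) * q = ψ x) := by
    intro x hxβ hx0
    have hφx : φ x = a * x⁻¹ + b := by rw [hφ, if_pos hx0]
    have hB : φ x - β = α * (x - β) * x⁻¹ := by
      rw [hφx]
      field_simp
      linear_combination x * hb' + hab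
    have hA : φ x - α = β * (x - α) * x⁻¹ := by
      rw [hφx]
      field_simp
      linear_combination x * hb' + hab
    have hφxβ : φ x ≠ β := by
      rw [← sub_ne_zero, hB]
      exact mul_ne_zero (mul_ne_zero hα0 (hsubβ x hxβ)) (inv_ne_zero hx0)
    refine ⟨hφxβ, ?_⟩
    have hxβ' := hsubβ x hxβ
    simp only [hψdef, hqdef]
    rw [show φ x - α = β * (x - α) * x⁻¹ from hA, show φ x - β = α * (x - β) * x⁻¹ from hB]
    field_simp
  -- behavior at 0 : φ 0 = b and ψ b * q = 1
  have hφ0 : φ 0 = b := by rw [hφ]; simp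
  have hbβ : b ≠ β := by
    rw [hb']
    intro h
    exact hα0 (by linear_combination h)
  have hψb : ψ b * q = 1 := by
    simp only [hψdef, hqdef, hb']
    have h1 : α + β - α = β := by ring
    have h2 : α + β - β = α := by ring
    rw [h1, h2]
    field_simp
  ------------------------------------------------------------------
  constructor
  · -- w ∈ Ω : period k - 1
    rintro ⟨j, hj1, hjk, hwj'⟩
    have hwj : w = q ^ j := hwj'
    -- claim1 : before hitting 0
    have claim1 : ∀ t, t ≤ j - 1 → (φ^[t] x0 ≠ β ∧ ψ (φ^[t] x0) * q ^ t = q ^ j) := by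
      intro t
      induction t with
      | zero =>
        intro _
        refine ⟨hx0β, ?_⟩
        simp [hψx0, hwj]
      | succ t ih =>
        intro ht
        obtain ⟨hneβ, heq⟩ := ih (by omega)
        have hne0 : φ^[t] x0 ≠ 0 := by
          intro h
          rw [h, hψ0] at heq
          have : q ^ (t + 1) = q ^ j := by rw [pow_succ]; linear_combination heq
          exact hqne (t + 1) j (by omega) (by omega) this
        obtain ⟨h1β, h1eq⟩ := hstep _ hneβ hne0
        rw [Function.iterate_succ_apply']
        refine ⟨h1β, ?_⟩
        rw [pow_succ]
        calc ψ (φ (φ^[t] x0)) * (q ^ t * q)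
            = (ψ (φ (φ^[t] x0)) * q) * q ^ t := by ring
          _ = ψ (φ^[t] x0) * q ^ t := by rw [h1eq]
          _ = q ^ j := heq
    -- the orbit hits 0 at time j - 1
    obtain ⟨hj1β, hj1eq⟩ := claim1 (j - 1) le_rfl
    have hψj1 : ψ (φ^[j - 1] x0) = q := by
      have h2 : q ^ j = q * q ^ (j - 1) := by
        rw [← pow_succ']
        congr 1
        omega
      rw [h2] at hj1eq
      exact mul_right_cancel₀ (pow_ne_zero _ hq0) (by linear_combination hj1eq)
    have hxj1 : φ^[j - 1] x0 = 0 := hψinj _ 0 hj1β h0β (by rw [hψj1, hψ0])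
    have hxj : φ^[j] x0 = b := by
      have : j = (j - 1) + 1 := by omega
      rw [this, Function.iterate_succ_apply', hxj1, hφ0]
    -- claim2 : after hitting 0
    have claim2 : ∀ s, s ≤ k - 1 - j → (φ^[j + s] x0 ≠ β ∧ ψ (φ^[j + s] x0) * q ^ (s + 1) = 1) := by
      intro s
      induction s with
      | zero =>
        intro _
        simp only [Nat.add_zero, Nat.zero_add, hxj, pow_one]
        exact ⟨hbβ, hψb⟩
      | succ s ih =>
        intro hs
        obtain ⟨hneβ, heq⟩ := ih (by omega)
        have hne0 : φ^[j + s] x0 ≠ 0 := by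
          intro h
          rw [h, hψ0] at heq
          have : q ^ 0 = q ^ (s + 2) := by
            rw [pow_zero, pow_succ]
            linear_combination -heq
          exact hqne 0 (s + 2) (by omega) (by omega) this
        obtain ⟨h1β, h1eq⟩ := hstep _ hneβ hne0
        rw [show j + (s + 1) = (j + s) + 1 by omega, Function.iterate_succ_apply']
        refine ⟨h1β, ?_⟩
        calc ψ (φ (φ^[j + s] x0)) * q ^ (s + 1 + 1)
            = (ψ (φ (φ^[j + s] x0)) * q) * q ^ (s + 1) := by ring
          _ = ψ (φ^[j + s] x0) * q ^ (s + 1) := by rw [h1eq]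
          _ = 1 := heq
    -- period : x_{k-1} = x0
    obtain ⟨hkβ, hkeq⟩ := claim2 (k - 1 - j) le_rfl
    rw [show j + (k - 1 - j) = k - 1 by omega] at hkβ hkeq
    rw [show k - 1 - j + 1 = k - j by omega] at hkeq
    have hwq : w * q ^ (k - j) = 1 := by
      rw [hwj, ← pow_add, show j + (k - j) = k by omega]
      exact hqk
    have hψk : ψ (φ^[k - 1] x0) = w :=
      mul_right_cancel₀ (pow_ne_zero _ hq0) (by rw [hkeq, hwq])
    have hper : φ^[k - 1] x0 = x0 := hψinj _ _ hkβ hx0β (by rw [hψk, hψx0])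
    refine ⟨hper, ?_⟩
    -- minimality
    intro T hT hTx
    by_contra hcon
    push_neg at hcon
    have hψT : ψ (φ^[T] x0) = q ^ j := by rw [hTx, hψx0, hwj]
    rcases le_or_gt T (j - 1) with hTj | hTj
    · obtain ⟨_, hTeq⟩ := claim1 T hTj
      rw [hψT] at hTeq
      have h1 : q ^ j * q ^ T = q ^ j * q ^ 0 := by
        rw [pow_zero, mul_one]; exact hTeq
      have : q ^ 0 = q ^ T := (mul_left_cancel₀ (pow_ne_zero j hq0) h1).symm
      exact hqne 0 T (by omega) (by omega) this
    · have hjT : j ≤ T := by omega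
      obtain ⟨_, hTeq⟩ := claim2 (T - j) (by omega)
      rw [show j + (T - j) = T by omega] at hTeq
      rw [hψT, ← pow_add] at hTeq
      have : q ^ 0 = q ^ (j + (T - j + 1)) := by rw [pow_zero]; exact hTeq.symm
      exact hqne 0 (j + (T - j + 1)) (by omega) (by omega) this
  · -- w ∉ Ω : period k
    intro hmem
    have hNot : ∀ m : ℕ, w ≠ q ^ m := by
      intro m hm
      apply hmem
      have hr : q ^ (m % k) = q ^ m := pow_mod_orderOf q m
      rcases Nat.eq_zero_or_pos (m % k) with h | h
      · rw [h, pow_zero] at hr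
        exact absurd (by rw [hm, ← hr]) hw1
      · exact ⟨m % k, h, by have := Nat.mod_lt m hk0; omega, by rw [hm, ← hr]⟩
    have claimA : ∀ t, φ^[t] x0 ≠ β ∧ ψ (φ^[t] x0) * q ^ t = w := by
      intro t
      induction t with
      | zero => exact ⟨hx0β, by simp [hψx0]⟩
      | succ t ih =>
        obtain ⟨hneβ, heq⟩ := ih
        have hne0 : φ^[t] x0 ≠ 0 := by
          intro h
          rw [h, hψ0] at heq
          exact hNot (t + 1) (by rw [pow_succ]; linear_combination -heq)
        obtain ⟨h1β, h1eq⟩ := hstep _ hneβ hne0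
        rw [Function.iterate_succ_apply']
        refine ⟨h1β, ?_⟩
        calc ψ (φ (φ^[t] x0)) * q ^ (t + 1)
            = (ψ (φ (φ^[t] x0)) * q) * q ^ t := by ring
          _ = ψ (φ^[t] x0) * q ^ t := by rw [h1eq]
          _ = w := heq
    obtain ⟨hkβ, hkeq⟩ := claimA k
    rw [hqk, mul_one] at hkeq
    have hper : φ^[k] x0 = x0 := hψinj _ _ hkβ hx0β (by rw [hkeq, hψx0])
    refine ⟨hper, ?_⟩
    intro T hT hTx
    by_contra hcon
    push_neg at hcon
    obtain ⟨_, hTeq⟩ := claimA T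
    rw [hTx, hψx0] at hTeq
    have hqT : q ^ 0 = q ^ T := by
      rw [pow_zero]
      exact (mul_left_cancel₀ hw0 (by rw [mul_one]; exact hTeq)).symm
    exact hqne 0 T (by omega) (by omega) hqT
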